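/- Let d ≥ 2 and 0 ≤ ε < η. Then the (2d−1)-dimensional Lebesgue measure of the set K_{ε,η} := {(ξ, τ) ∈ ℂ^{d−1} × ℝ : (ε + ‖ξ‖²)² + τ² < η²} equals κ_{2d−2}·η^d·h_d(ε/η), where κ_{2d−2} is the Lebesgue volume of the unit ball in ℝ^{2d−2} and h_d(t) = 2∫₀^{arcsin√(1−t²)}(cos θ − t)^{d−1} cos θ dθ. -/

import Mathlib

open MeasureTheory

/-- `hfun d t = 2 ∫₀^{arcsin √(1−t²)} (cos θ − t)^{d−1} cos θ dθ`. -/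
noncomputable def hfun (d : ℕ) (t : ℝ) : ℝ :=
  2 * ∫ θ in (0:ℝ)..(Real.arcsin (Real.sqrt (1 - t ^ 2))), (Real.cos θ - t) ^ (d - 1) * Real.cos θ



open Real in
lemma slice_vol (n : ℕ) (hn : n ≠ 0) (c : ℝ) :
    volume {x : Fin n → ℂ | ∑ j, Complex.normSq (x j) < c} =
      ENNReal.ofReal ((max c 0) ^ n * (Real.pi ^ n / Real.Gamma (n + 1))) := by
  have hne : Nonempty (Fin n) := Fin.pos_iff_nonempty.mp (Nat.pos_of_ne_zero hn)
  rcases le_or_gt c 0 with hc | hc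
  · have hempty : {x : Fin n → ℂ | ∑ j, Complex.normSq (x j) < c} = ∅ := by
      ext x
      simp only [Set.mem_setOf_eq, Set.mem_empty_iff_false, iff_false, not_lt]
      exact hc.trans (Finset.sum_nonneg fun j _ => Complex.normSq_nonneg _)
    rw [hempty, measure_empty, max_eq_right hc, zero_pow hn, zero_mul, ENNReal.ofReal_zero]
  · have hset : {x : Fin n → ℂ | ∑ j, Complex.normSq (x j) < c} =
        {x : Fin n → ℂ | (∑ j, ‖x j‖ ^ (2:ℝ)) ^ ((1:ℝ)/2) < Real.sqrt c} := by
      ext x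
      have h1 : ∀ j, ‖x j‖ ^ (2:ℝ) = Complex.normSq (x j) := by
        intro j
        rw [Real.rpow_two, Complex.normSq_eq_norm_sq]
      simp only [Set.mem_setOf_eq, h1]
      rw [← Real.sqrt_eq_rpow,
        Real.sqrt_lt_sqrt_iff (Finset.sum_nonneg fun j _ => Complex.normSq_nonneg _)]
    rw [hset, Complex.volume_sum_rpow_lt _ one_le_two]
    have h2 : (2:ℝ)/2 + 1 = 2 := by norm_num
    have h3 : 2 * (Fintype.card (Fin n) : ℝ) / 2 + 1 = n + 1 := by
      simp only [Fintype.card_fin]; ring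
    rw [h2, h3, Real.Gamma_two, mul_one, Fintype.card_fin]
    have h4 : ENNReal.ofReal (Real.sqrt c) ^ 2 = ENNReal.ofReal c := by
      rw [← ENNReal.ofReal_pow (Real.sqrt_nonneg c), Real.sq_sqrt hc.le]
    rw [max_eq_left hc.le, pow_mul, h4, ← ENNReal.ofReal_pow hc.le,
      ← ENNReal.ofReal_mul (by positivity)]


open Real in
lemma key_integral (n : ℕ) {ε η : ℝ} (hε : 0 ≤ ε) (hεη : ε < η) :
    (∫ τ in (-Real.sqrt (η^2 - ε^2))..(Real.sqrt (η^2 - ε^2)),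
        (Real.sqrt (η^2 - τ^2) - ε) ^ n)
      = η ^ (n+1) * (2 * ∫ θ in (0:ℝ)..(Real.arcsin (Real.sqrt (1 - (ε/η)^2))),
          (Real.cos θ - ε/η) ^ n * Real.cos θ) := by
  have hη : 0 < η := lt_of_le_of_lt hε hεη
  set t := ε / η with ht
  set T := Real.sqrt (η^2 - ε^2) with hT
  set A := Real.arcsin (Real.sqrt (1 - t^2)) with hA
  have ht0 : 0 ≤ t := div_nonneg hε hη.le
  have ht1 : t < 1 := (div_lt_one hη).mpr hεη
  have ht2 : 0 ≤ 1 - t^2 := by nlinarith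
  have hs1 : Real.sqrt (1 - t^2) ≤ 1 := Real.sqrt_le_one.mpr (by nlinarith)
  have hsub : Real.sqrt (1 - t^2) = T / η := by
    rw [eq_div_iff hη.ne', ← Real.sqrt_sq hη.le, ← Real.sqrt_mul ht2]
    congr 1
    field_simp [ht]
    rw [ht, sub_mul, div_pow, div_mul_cancel₀ _ (by positivity)]; ring
  have hsinA : Real.sin A = T / η := by
    rw [hA, Real.sin_arcsin (le_trans (by norm_num) (Real.sqrt_nonneg _)) hs1, hsub]
  have hcosA : Real.cos A = t := by
    rw [hA, Real.cos_arcsin, Real.sq_sqrt ht2]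
    simp only [sub_sub_cancel]
    exact Real.sqrt_sq ht0
  have hA0 : 0 ≤ A := Real.arcsin_nonneg.mpr (Real.sqrt_nonneg _)
  have hA2 : A ≤ π / 2 := Real.arcsin_le_pi_div_two _
  have hcosnn : ∀ θ ∈ Set.uIcc (-A) A, 0 ≤ Real.cos θ := by
    intro θ hθ
    rw [Set.uIcc_of_le (by linarith)] at hθ
    exact Real.cos_nonneg_of_mem_Icc ⟨by linarith [hθ.1, Real.pi_div_two_pos], by linarith [hθ.2]⟩
  have hf : Continuous fun u : ℝ => (Real.sqrt (η^2 - u^2) - ε) ^ n := by fun_prop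
  have hderiv : ∀ x ∈ Set.uIcc (-A) A,
      HasDerivAt (fun θ => η * Real.sin θ) (η * Real.cos x) x :=
    fun x _ => (Real.hasDerivAt_sin x).const_mul η
  have hgc : ContinuousOn (fun x => η * Real.cos x) (Set.uIcc (-A) A) := by fun_prop
  have hTsin : η * Real.sin A = T := by rw [hsinA]; field_simp
  have hTsin' : η * Real.sin (-A) = -T := by rw [Real.sin_neg, mul_neg, hTsin]
  calc (∫ τ in (-T)..T, (Real.sqrt (η^2 - τ^2) - ε) ^ n)
      = ∫ τ in (η * Real.sin (-A))..(η * Real.sin A), (Real.sqrt (η^2 - τ^2) - ε) ^ n := by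
        rw [hTsin, hTsin']
    _ = ∫ x in (-A)..A, (η * Real.cos x) •
          (fun u => (Real.sqrt (η^2 - u^2) - ε) ^ n) (η * Real.sin x) :=
        (intervalIntegral.integral_comp_smul_deriv hderiv hgc hf).symm
    _ = ∫ x in (-A)..A, η^(n+1) * ((Real.cos x - t) ^ n * Real.cos x) := by
        apply intervalIntegral.integral_congr
        intro θ hθ
        have hc : 0 ≤ Real.cos θ := hcosnn θ hθ
        have h1 : Real.sqrt (η^2 - (η * Real.sin θ)^2) = η * Real.cos θ := by
          rw [show η^2 - (η * Real.sin θ)^2 = (η * Real.cos θ)^2 by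
            nlinarith [Real.sin_sq_add_cos_sq θ]]
          exact Real.sqrt_sq (by positivity)
        simp only [smul_eq_mul, h1]
        rw [show η * Real.cos θ - ε = η * (Real.cos θ - t) by rw [ht, mul_sub, mul_div_assoc', mul_div_cancel_left₀ _ hη.ne']]
        rw [mul_pow]
        ring
    _ = η^(n+1) * ∫ x in (-A)..A, (Real.cos x - t) ^ n * Real.cos x :=
        intervalIntegral.integral_const_mul _ _
    _ = η^(n+1) * (2 * ∫ θ in (0:ℝ)..A, (Real.cos θ - t) ^ n * Real.cos θ) := by
        congr 1
        have hInt : ∀ a b : ℝ, IntervalIntegrable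
            (fun x => (Real.cos x - t) ^ n * Real.cos x) volume a b :=
          fun a b => (by fun_prop : Continuous fun x : ℝ =>
            (Real.cos x - t) ^ n * Real.cos x).intervalIntegrable a b
        rw [← intervalIntegral.integral_add_adjacent_intervals (hInt (-A) 0) (hInt 0 A)]
        have heven : (∫ x in (-A)..(0:ℝ), (Real.cos x - t) ^ n * Real.cos x)
            = ∫ x in (0:ℝ)..A, (Real.cos x - t) ^ n * Real.cos x := by
          rw [show (-A) = -A from rfl, show (0:ℝ) = -(0:ℝ) by norm_num,
            ← intervalIntegral.integral_comp_neg]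
          simp [Real.cos_neg]
        rw [heven]
        ring

open Real in
theorem stmt13 (d : ℕ) (hd : 2 ≤ d) (ε η : ℝ) (hε : 0 ≤ ε) (hεη : ε < η) :
    volume {p : (Fin (d - 1) → ℂ) × ℝ |
        (ε + ∑ j, Complex.normSq (p.1 j)) ^ 2 + p.2 ^ 2 < η ^ 2} =
      ENNReal.ofReal
        ((volume (Metric.ball (0 : EuclideanSpace ℝ (Fin (2 * d - 2))) 1)).toReal *
          η ^ d * hfun d (ε / η)) := by
  obtain ⟨n, rfl⟩ : ∃ n, d = n + 1 := ⟨d - 1, by omega⟩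
  have hn : n ≠ 0 := by omega
  have hη : 0 < η := lt_of_le_of_lt hε hεη
  set C : ℝ := Real.pi ^ n / Real.Gamma (n + 1) with hC
  have hΓpos : 0 < Real.Gamma (n + 1) := Real.Gamma_pos_of_pos (by positivity)
  have hCpos : 0 < C := by positivity
  have hκ : (volume (Metric.ball (0 : EuclideanSpace ℝ (Fin (2 * (n+1) - 2))) 1)).toReal = C := by
    have h2n : Nonempty (Fin (2 * (n+1) - 2)) := ⟨⟨0, by omega⟩⟩
    rw [EuclideanSpace.volume_ball, Fintype.card_fin]
    have hcard : 2 * (n+1) - 2 = 2 * n := by omega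
    rw [hcard]
    have h1 : Real.sqrt π ^ (2 * n) = π ^ n := by
      rw [pow_mul, Real.sq_sqrt Real.pi_pos.le]
    have h2 : ((2 * n : ℕ) : ℝ) / 2 + 1 = (n : ℝ) + 1 := by push_cast; ring
    rw [h1, h2, ENNReal.ofReal_one, one_pow, one_mul,
      ENNReal.toReal_ofReal (by positivity)]
  show volume {p : (Fin n → ℂ) × ℝ |
        (ε + ∑ j, Complex.normSq (p.1 j)) ^ 2 + p.2 ^ 2 < η ^ 2} =
      ENNReal.ofReal
        ((volume (Metric.ball (0 : EuclideanSpace ℝ (Fin (2 * (n+1) - 2))) 1)).toReal *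
          η ^ (n+1) * hfun (n+1) (ε / η))
  rw [hκ]
  set T := Real.sqrt (η^2 - ε^2) with hT
  have hT2 : T ^ 2 = η^2 - ε^2 := Real.sq_sqrt (by nlinarith)
  have hTnn : 0 ≤ T := Real.sqrt_nonneg _
  have hiff : ∀ (s τ : ℝ), 0 ≤ s →
      ((ε + s)^2 + τ^2 < η^2 ↔ s < Real.sqrt (η^2 - τ^2) - ε) := by
    intro s τ hs
    constructor
    · intro h
      have h2 : 0 < η^2 - τ^2 := by nlinarith
      have h3 : ε + s < Real.sqrt (η^2 - τ^2) := by
        rw [show ε + s = Real.sqrt ((ε+s)^2) from (Real.sqrt_sq (by positivity)).symm]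
        exact Real.sqrt_lt_sqrt (by positivity) (by nlinarith)
      linarith
    · intro h
      rcases le_or_gt 0 (η^2 - τ^2) with hpos | hneg
      · have h4 := Real.sq_sqrt hpos
        have h5 : ε + s < Real.sqrt (η^2 - τ^2) := by linarith
        nlinarith [Real.sqrt_nonneg (η^2 - τ^2)]
      · exfalso
        have h6 : Real.sqrt (η^2 - τ^2) = 0 := Real.sqrt_eq_zero_of_nonpos hneg.le
        rw [h6] at h
        linarith
  have hopen : IsOpen {p : (Fin n → ℂ) × ℝ |
      (ε + ∑ j, Complex.normSq (p.1 j)) ^ 2 + p.2 ^ 2 < η ^ 2} := by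
    apply isOpen_lt _ continuous_const
    exact ((continuous_const.add (continuous_finset_sum _ fun j _ =>
      Complex.continuous_normSq.comp ((continuous_apply j).comp continuous_fst))).pow 2).add
      (continuous_snd.pow 2)
  rw [Measure.volume_eq_prod, Measure.prod_apply_symm hopen.measurableSet]
  have hslice : ∀ τ : ℝ,
      volume ((fun x : Fin n → ℂ => (x, τ)) ⁻¹' {p : (Fin n → ℂ) × ℝ |
        (ε + ∑ j, Complex.normSq (p.1 j)) ^ 2 + p.2 ^ 2 < η ^ 2}) =
      ENNReal.ofReal (max (Real.sqrt (η^2 - τ^2) - ε) 0 ^ n * C) := by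
    intro τ
    have hsets : ((fun x : Fin n → ℂ => (x, τ)) ⁻¹' {p : (Fin n → ℂ) × ℝ |
        (ε + ∑ j, Complex.normSq (p.1 j)) ^ 2 + p.2 ^ 2 < η ^ 2}) =
        {x : Fin n → ℂ | ∑ j, Complex.normSq (x j) < Real.sqrt (η^2 - τ^2) - ε} := by
      ext x
      simp only [Set.mem_preimage, Set.mem_setOf_eq]
      exact hiff _ τ (Finset.sum_nonneg fun j _ => Complex.normSq_nonneg _)
    rw [hsets, slice_vol n hn _]
  simp_rw [hslice]
  set f : ℝ → ℝ := fun τ => max (Real.sqrt (η^2 - τ^2) - ε) 0 ^ n with hfdef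
  have hgsupp : ∀ τ : ℝ, τ ∉ Set.Ioo (-T) T → f τ = 0 := by
    intro τ hτ
    have hτ2 : T ^ 2 ≤ τ ^ 2 := by
      simp only [Set.mem_Ioo, not_and_or, not_lt] at hτ
      rcases hτ with h | h
      · nlinarith
      · nlinarith
    have hle : Real.sqrt (η^2 - τ^2) ≤ ε := by
      calc Real.sqrt (η^2 - τ^2) ≤ Real.sqrt (ε^2) := Real.sqrt_le_sqrt (by nlinarith)
      _ = ε := Real.sqrt_sq hε
    have hmax : max (Real.sqrt (η^2 - τ^2) - ε) 0 = 0 := max_eq_right (by linarith)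
    simp only [hfdef, hmax, zero_pow hn]
  have hfc : Continuous f := by
    apply Continuous.pow
    exact Continuous.max (by fun_prop) continuous_const
  have hfint : Integrable (fun τ => f τ * C) := by
    apply Continuous.integrable_of_hasCompactSupport (hfc.mul continuous_const)
    apply HasCompactSupport.intro isCompact_Icc (K := Set.Icc (-T) T)
    intro τ hτ
    rw [Pi.mul_apply, hgsupp τ (fun hmem => hτ (Set.Ioo_subset_Icc_self hmem)), zero_mul]
  rw [← MeasureTheory.ofReal_integral_eq_lintegral_ofReal hfint
    (Filter.Eventually.of_forall fun τ => by positivity)]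
  have hint1 : ∫ τ, f τ * C = (∫ τ, f τ) * C := by rw [integral_mul_const]
  have hint2 : ∫ τ, f τ = ∫ τ in (-T)..T, (Real.sqrt (η^2 - τ^2) - ε) ^ n := by
    rw [← MeasureTheory.setIntegral_eq_integral_of_forall_compl_eq_zero
      (s := Set.Ioc (-T) T)
      (fun τ hτ => hgsupp τ (fun hmem => hτ (Set.Ioo_subset_Ioc_self hmem))),
      ← intervalIntegral.integral_of_le (by linarith)]
    apply intervalIntegral.integral_congr
    intro τ hτ
    rw [Set.uIcc_of_le (by linarith)] at hτ
    have hτ2 : τ ^ 2 ≤ T ^ 2 := by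
      rcases hτ with ⟨h1, h2⟩
      nlinarith
    have hge : ε ≤ Real.sqrt (η^2 - τ^2) := by
      calc ε = Real.sqrt (ε^2) := (Real.sqrt_sq hε).symm
      _ ≤ Real.sqrt (η^2 - τ^2) := Real.sqrt_le_sqrt (by nlinarith)
    simp only [hfdef, max_eq_left (by linarith : (0:ℝ) ≤ Real.sqrt (η^2 - τ^2) - ε)]
  rw [hint1, hint2, key_integral n hε hεη]
  have hhfun : hfun (n+1) (ε/η) = 2 * ∫ θ in (0:ℝ)..(Real.arcsin (Real.sqrt (1 - (ε/η)^2))),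
      (Real.cos θ - ε/η) ^ n * Real.cos θ := by
    simp only [hfun, Nat.add_sub_cancel]
  rw [hhfun]
  congr 1
  ring
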